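/- For every integer n, the product of the bicomplex Pell number BP(n) with its ij-conjugate satisfies BP(n) · (BP(n))*_{ij} = 6·P(2n+3)·1 + 4·(−1)^{n+1}·ij. -/

import Mathlib

open scoped TensorProduct
noncomputable def bi : ℂ ⊗[ℝ] ℂ := Complex.I ⊗ₜ[ℝ] 1
noncomputable def bj : ℂ ⊗[ℝ] ℂ := (1 : ℂ) ⊗ₜ[ℝ] Complex.I
noncomputable def bij : ℂ ⊗[ℝ] ℂ := Complex.I ⊗ₜ[ℝ] Complex.I

lemma hbi2 : bi * bi = -1 := by
  simp [bi, Algebra.TensorProduct.tmul_mul_tmul, Complex.I_mul_I,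
    Algebra.TensorProduct.one_def, TensorProduct.neg_tmul]

lemma hbj2 : bj * bj = -1 := by
  simp [bj, Algebra.TensorProduct.tmul_mul_tmul, Complex.I_mul_I,
    Algebra.TensorProduct.one_def, TensorProduct.tmul_neg]

lemma hbij2 : bij * bij = 1 := by
  simp [bij, Algebra.TensorProduct.tmul_mul_tmul, Complex.I_mul_I,
    Algebra.TensorProduct.one_def, TensorProduct.neg_tmul, TensorProduct.tmul_neg]

lemma hbibj : bi * bj = bij := by
  simp [bi, bj, bij, Algebra.TensorProduct.tmul_mul_tmul]

lemma key {R : Type*} [CommRing R] (e f g : R) (h1 : e*e = -1) (h2 : f*f = -1)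
    (h3 : g*g = 1) (h4 : e*f = g) (A B C D : R) :
    (A + B*e + C*f + D*g) * (A - B*e - C*f + D*g)
      = (A^2+B^2+C^2+D^2) + (2*A*D - 2*B*C)*g := by
  linear_combination (-(B^2))*h1 - C^2*h2 + D^2*h3 - 2*B*C*h4



lemma rec_zero (g : ℤ → ℤ) (hg : ∀ a b : ℤ, a = b + 2 → g a = 2 * g (b+1) + g b)
    (h0 : g 0 = 0) (h1 : g 1 = 0) : ∀ n : ℤ, g n = 0 := by
  have key : ∀ n : ℤ, g n = 0 ∧ g (n+1) = 0 := by
    intro n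
    induction n using Int.induction_on with
    | zero => exact ⟨h0, h1⟩
    | succ k ih =>
      refine ⟨ih.2, ?_⟩
      have h2 := hg ((k:ℤ)+1+1) k (by ring)
      rw [h2, ih.1, ih.2]; ring
    | pred k ih =>
      have h2 := hg (-(k:ℤ)+1) (-(k:ℤ)-1) (by ring)
      rw [show -(k:ℤ)-1+1 = -k by ring] at h2
      refine ⟨by linarith [ih.1, ih.2], ?_⟩
      rw [show -(k:ℤ)-1+1 = -k by ring]; exact ih.1
  exact fun n => (key n).1

section
variable (P : ℤ → ℤ) (hP : ∀ n : ℤ, P (n + 2) = 2 * P (n + 1) + P n)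
  (hP0 : P 0 = 0) (hP1 : P 1 = 1)

include hP hP0 hP1 in
lemma pell_add : ∀ m k : ℤ, P (m+k+1) = P (m+1) * P (k+1) + P m * P k := by
  have hP3 : ∀ a b c : ℤ, a = c+2 → b = c+1 → P a = 2*P b + P c := by
    intro a b c h1 h2; rw [h1, h2]; exact hP c
  intro m
  have hz := rec_zero (fun k => P (m+k+1) - (P (m+1) * P (k+1) + P m * P k)) ?_ ?_ ?_
  · intro k; have := hz k; linarith
  · intro a b hab
    have E1 := hP3 (m+a+1) (m+(b+1)+1) (m+b+1) (by omega) (by omega)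
    have E2 := hP3 (a+1) ((b+1)+1) (b+1) (by omega) (by omega)
    have E3 := hP3 a (b+1) b (by omega) (by omega)
    linear_combination E1 - P (m+1) * E2 - P m * E3
  · simp only [add_zero, zero_add]
    rw [hP0, hP1]; ring
  · have hA := hP3 (m+1+1) (m+1) m (by ring) (by ring)
    have hB := hP3 ((1:ℤ)+1) 1 0 (by norm_num) (by norm_num)
    linear_combination hA - P (m+1) * hB - (P m + 2*P (m+1)) * hP1 - P (m+1) * hP0

include hP hP0 hP1 in
lemma pell_cassini : ∀ n : ℤ, (P (n+2) : ℝ) * P n - P (n+1) * P (n+1) = (-1 : ℝ)^(n+1) := by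
  have hPr : ∀ a b c : ℤ, a = c+2 → b = c+1 → (P a : ℝ) = 2*P b + P c := by
    intro a b c h1 h2; rw [h1, h2]; exact_mod_cast hP c
  have hz1 : ∀ m : ℤ, (-1:ℝ)^(m+1) = -(-1:ℝ)^m := fun m => by
    rw [zpow_add_one₀ (by norm_num : (-1:ℝ) ≠ 0)]; ring
  have hP2 : P 2 = 2 := by
    have h := hP 0; simp only [zero_add] at h; rw [h, hP0, hP1]; norm_num
  intro n
  induction n using Int.induction_on with
  | zero =>
    norm_num [hP0, hP1, hP2]
  | succ k ih =>
    rw [hz1 ((k:ℤ)+1), ← ih, show (k:ℤ)+1+2 = k+3 by ring, show (k:ℤ)+1+1 = k+2 by ring]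
    have h1 := hPr ((k:ℤ)+3) (k+2) (k+1) (by ring) (by ring)
    have h2 := hPr ((k:ℤ)+2) (k+1) k (by ring) (by ring)
    linear_combination (P (k+1) : ℝ) * h1 - (P (k+2) : ℝ) * h2
  | pred k ih =>
    rw [show -(k:ℤ)-1+2 = -k+1 by ring, show -(k:ℤ)-1+1 = -k by ring] at *
    rw [show (-1:ℝ)^(-(k:ℤ)) = -(-1:ℝ)^(-(k:ℤ)+1) by rw [hz1]; ring, ← ih]
    have h1 := hPr (-(k:ℤ)+1) (-k) (-k-1) (by ring) (by ring)
    have h2 := hPr (-(k:ℤ)+2) (-k+1) (-k) (by ring) (by ring)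
    linear_combination (P (-(k:ℤ)) : ℝ) * h2 - (P (-(k:ℤ)+1) : ℝ) * h1
end


/-- The bicomplex Pell number `BP n = P n + P (n+1) i + P (n+2) j + P (n+3) ij`. -/
noncomputable def BP (P : ℤ → ℤ) (n : ℤ) : ℂ ⊗[ℝ] ℂ :=
  (P n : ℝ) • (1 : ℂ ⊗[ℝ] ℂ) + (P (n + 1) : ℝ) • bi + (P (n + 2) : ℝ) • bj +
    (P (n + 3) : ℝ) • bij

/-- The ij-conjugate of the bicomplex Pell number. -/
noncomputable def BPconjIJ (P : ℤ → ℤ) (n : ℤ) : ℂ ⊗[ℝ] ℂ :=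
  (P n : ℝ) • (1 : ℂ ⊗[ℝ] ℂ) - (P (n + 1) : ℝ) • bi - (P (n + 2) : ℝ) • bj +
    (P (n + 3) : ℝ) • bij

theorem bicomplexPell_mul_conjIJ (P : ℤ → ℤ)
    (hP : ∀ n : ℤ, P (n + 2) = 2 * P (n + 1) + P n) (hP0 : P 0 = 0) (hP1 : P 1 = 1)
    (n : ℤ) :
    BP P n * BPconjIJ P n =
      (6 * (P (2 * n + 3) : ℝ)) • (1 : ℂ ⊗[ℝ] ℂ) +
        (4 * (-1 : ℝ) ^ (n + 1)) • bij := by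
  have hPr : ∀ a b c : ℤ, a = c+2 → b = c+1 → (P a : ℝ) = 2*P b + P c := by
    intro a b c h1 h2; rw [h1, h2]; exact_mod_cast hP c
  have hc : (P (n+2) : ℝ) = 2*P (n+1) + P n := hPr _ _ n rfl rfl
  have hd : (P (n+3) : ℝ) = 2*P (n+2) + P (n+1) := hPr _ _ (n+1) (by ring) (by ring)
  have hcas := pell_cassini P hP hP0 hP1 n
  have hid1 : (P (2*n+3) : ℝ) = P (n+2) * P (n+2) + P (n+1) * P (n+1) := by
    have h := pell_add P hP hP0 hP1 (n+1) (n+1)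
    rw [show n+1+(n+1)+1 = 2*n+3 by ring, show n+1+1 = n+2 by ring] at h
    exact_mod_cast h
  have hA : (P n : ℝ)^2 + (P (n+1) : ℝ)^2 + (P (n+2) : ℝ)^2 + (P (n+3) : ℝ)^2
      = 6 * (P (2*n+3) : ℝ) := by
    linear_combination (-6)*hid1 + ((P (n+3):ℝ) + 2*P (n+2) + P (n+1))*hd
      - ((P (n+2):ℝ) - 2*P (n+1) + P n)*hc
  have hB : 2*(P n : ℝ)*(P (n+3) : ℝ) - 2*(P (n+1) : ℝ)*(P (n+2) : ℝ)
      = 4 * (-1:ℝ)^(n+1) := by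
    linear_combination 4*hcas + 2*(P n : ℝ)*hd - 2*(P (n+1) : ℝ)*hc
  have hsm : ∀ (r : ℝ) (x : ℂ ⊗[ℝ] ℂ), r • x = algebraMap ℝ (ℂ ⊗[ℝ] ℂ) r * x :=
    fun r x => Algebra.smul_def r x
  simp only [BP, BPconjIJ, hsm, mul_one]
  rw [← hA, ← hB]
  simp only [map_add, map_mul, map_sub, map_pow, map_ofNat]
  linear_combination key bi bj bij hbi2 hbj2 hbij2 hbibj
    (algebraMap ℝ (ℂ ⊗[ℝ] ℂ) (P n : ℝ)) (algebraMap ℝ (ℂ ⊗[ℝ] ℂ) (P (n+1) : ℝ))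
    (algebraMap ℝ (ℂ ⊗[ℝ] ℂ) (P (n+2) : ℝ)) (algebraMap ℝ (ℂ ⊗[ℝ] ℂ) (P (n+3) : ℝ))
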